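/- The assignment J ↦ V(J) is a bijection from the set of orthogonal complex structures on Euclidean ℝ^{2m} (linear isometries J with J² = -Id) onto the set of maximal isotropic subspaces of ℂ^{2m} with respect to the ℂ-bilinear dot product B; that is, the map is injective, and every m-dimensional subspace W ⊆ ℂ^{2m} on which B vanishes identically equals V(J) for a unique orthogonal complex structure J. -/

import Mathlib

open Matrix Finset

lemma mulVec_map_coe {n : ℕ} (J : Matrix (Fin n) (Fin n) ℝ) (w : Fin n → ℝ) :
    (J.map (fun x => (x : ℂ))).mulVec (fun i => (w i : ℂ)) = fun i => ((J.mulVec w) i : ℂ) := by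
  funext i
  simp [Matrix.mulVec, dotProduct, Matrix.map_apply]

lemma dot_helper {n m : ℕ} (u w : Fin m → Fin n → ℝ)
    (huu : ∀ j k, (∑ i, u j i * u k i) = if j = k then 2⁻¹ else 0)
    (huw : ∀ j k, (∑ i, u j i * w k i) = 0)
    (α β : Fin m → ℝ) (v₀ : Fin n → ℝ)
    (hv₀ : ∀ i, v₀ i = ∑ j, (α j * u j i + β j * w j i)) (k : Fin m) :
    (∑ i, u k i * v₀ i) = α k * 2⁻¹ := by
  have h1 : ∀ i, u k i * v₀ i = ∑ j, (α j * (u k i * u j i) + β j * (u k i * w j i)) := by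
    intro i
    rw [hv₀ i, Finset.mul_sum]
    exact Finset.sum_congr rfl fun j _ => by ring
  calc (∑ i, u k i * v₀ i) = ∑ i, ∑ j, (α j * (u k i * u j i) + β j * (u k i * w j i)) := by
        exact Finset.sum_congr rfl fun i _ => h1 i
    _ = ∑ j, ∑ i, (α j * (u k i * u j i) + β j * (u k i * w j i)) := Finset.sum_comm
    _ = ∑ j, (α j * (∑ i, u k i * u j i) + β j * (∑ i, u k i * w j i)) := by
        exact Finset.sum_congr rfl fun j _ => by rw [Finset.sum_add_distrib, Finset.mul_sum, Finset.mul_sum]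
    _ = ∑ j, (α j * (if k = j then 2⁻¹ else 0)) := by
        refine Finset.sum_congr rfl fun j _ => ?_
        rw [huu k j, huw k j, mul_zero, add_zero]
    _ = α k * 2⁻¹ := by simp

lemma swap_dot {n m : ℕ} (u : Fin n → ℝ) (f g : Fin m → Fin n → ℝ) (A B : Fin m → ℝ) :
    (∑ i, u i * (2 * ∑ j, (f j i * A j - g j i * B j)))
      = 2 * ∑ j, ((∑ i, u i * f j i) * A j - (∑ i, u i * g j i) * B j) := by
  calc (∑ i, u i * (2 * ∑ j, (f j i * A j - g j i * B j)))
      = ∑ i, ∑ j, 2 * ((u i * f j i) * A j - (u i * g j i) * B j) := by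
        refine Finset.sum_congr rfl fun i _ => ?_
        rw [Finset.mul_sum, Finset.mul_sum]
        exact Finset.sum_congr rfl fun j _ => by ring
    _ = ∑ j, ∑ i, 2 * ((u i * f j i) * A j - (u i * g j i) * B j) := Finset.sum_comm
    _ = 2 * ∑ j, ((∑ i, u i * f j i) * A j - (∑ i, u i * g j i) * B j) := by
        rw [Finset.mul_sum]
        refine Finset.sum_congr rfl fun j _ => ?_
        rw [Finset.sum_mul, Finset.sum_mul, ← Finset.sum_sub_distrib, Finset.mul_sum]

/-- `V(J) = {v₀ + i·J_ℂ v₀ : v₀ ∈ ℝ^{2m}} ⊆ ℂ^{2m}`, for an orthogonal complex structure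
given by the matrix `J`, with `J_ℂ` its complexification. -/
def VJset (m : ℕ) (J : Matrix (Fin (2 * m)) (Fin (2 * m)) ℝ) : Set (Fin (2 * m) → ℂ) :=
  {v | ∃ v₀ : Fin (2 * m) → ℝ,
    v = (fun i => (v₀ i : ℂ)) +
        Complex.I • (J.map (fun x => (x : ℂ))).mulVec (fun i => (v₀ i : ℂ))}

lemma exists_ocs (m : ℕ) (W : Submodule ℂ (Fin (2 * m) → ℂ))
    (hdim : Module.finrank ℂ W = m)
    (hiso : ∀ v ∈ W, ∀ w ∈ W, (∑ i, v i * w i) = 0) :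
    ∃ J : Matrix (Fin (2 * m)) (Fin (2 * m)) ℝ,
      (Jᵀ * J = 1 ∧ J * J = -1) ∧ (W : Set (Fin (2 * m) → ℂ)) = VJset m J := by
  classical
  have key : ∃ b : Fin m → (Fin (2 * m) → ℂ),
      (∀ j, b j ∈ W) ∧
      (∀ j k, (∑ i, (starRingEnd ℂ) (b j i) * b k i) = if j = k then 1 else 0) ∧
      (∀ v ∈ W, ∃ c : Fin m → ℂ, ∀ i, v i = ∑ j, c j * b j i) := by
    set E : EuclideanSpace ℂ (Fin (2 * m)) ≃ₗ[ℂ] (Fin (2 * m) → ℂ) :=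
      WithLp.linearEquiv 2 ℂ (Fin (2 * m) → ℂ) with hE
    set W' : Submodule ℂ (EuclideanSpace ℂ (Fin (2 * m))) := W.map (E.symm : _ →ₗ[ℂ] _) with hW'
    have hd : Module.finrank ℂ W' = m := by
      rw [hW', LinearEquiv.finrank_map_eq E.symm W, hdim]
    have := FiniteDimensional.finiteDimensional_submodule W'
    let o : OrthonormalBasis (Fin m) ℂ W' :=
      (stdOrthonormalBasis ℂ W').reindex (finCongr hd)
    refine ⟨fun j => E ((o j : W') : EuclideanSpace ℂ (Fin (2 * m))), ?_, ?_, ?_⟩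
    · intro j
      obtain ⟨w, hw, hw2⟩ := Submodule.mem_map.mp (o j).2
      have h4 : E ((o j : W') : EuclideanSpace ℂ (Fin (2 * m))) = w := by
        rw [← hw2]; exact E.apply_symm_apply w
      show E ((o j : W') : EuclideanSpace ℂ (Fin (2 * m))) ∈ W
      rw [h4]; exact hw
    · intro j k
      have h0 := (orthonormal_iff_ite.mp o.orthonormal) j k
      rw [Submodule.coe_inner, PiLp.inner_apply] at h0
      simpa [RCLike.inner_apply, hE, mul_comm] using h0
    · intro v hv
      have hv' : E.symm v ∈ W' := Submodule.mem_map.mpr ⟨v, hv, rfl⟩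
      refine ⟨fun j => o.repr ⟨E.symm v, hv'⟩ j, ?_⟩
      have h1 := o.sum_repr ⟨E.symm v, hv'⟩
      have h2 := congrArg (fun (z : W') => E (z : EuclideanSpace ℂ (Fin (2 * m)))) h1
      simp only [] at h2
      rw [Submodule.coe_sum] at h2
      intro i
      have h3 := congrArg (fun (f : Fin (2 * m) → ℂ) => f i) h2
      simp only [map_sum] at h3
      rw [E.apply_symm_apply] at h3
      rw [← h3]
      simp [Finset.sum_apply]
  obtain ⟨b, hbW, horth, hspan⟩ := key
  have hisoB : ∀ j k, (∑ i, b j i * b k i) = 0 := fun j k => hiso _ (hbW j) _ (hbW k)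
  set x : Fin m → Fin (2 * m) → ℝ := fun j i => (b j i).re with hx
  set y : Fin m → Fin (2 * m) → ℝ := fun j i => (b j i).im with hy
  have hA : ∀ j k, (∑ i, (x j i * x k i + y j i * y k i)) = if j = k then 1 else 0 := by
    intro j k
    calc (∑ i, (x j i * x k i + y j i * y k i))
        = ∑ i, ((starRingEnd ℂ) (b j i) * b k i).re := by
          refine Finset.sum_congr rfl fun i _ => ?_
          simp [Complex.mul_re, hx, hy]
      _ = if j = k then 1 else 0 := by
          rw [← Complex.re_sum, horth j k]; simp [apply_ite Complex.re]
  have hB : ∀ j k, (∑ i, (x j i * x k i - y j i * y k i)) = 0 := by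
    intro j k
    calc (∑ i, (x j i * x k i - y j i * y k i))
        = ∑ i, (b j i * b k i).re := by
          refine Finset.sum_congr rfl fun i _ => ?_
          simp [Complex.mul_re, hx, hy]
      _ = 0 := by rw [← Complex.re_sum, hisoB j k]; simp
  have hC : ∀ j k, (∑ i, (x j i * y k i - y j i * x k i)) = 0 := by
    intro j k
    calc (∑ i, (x j i * y k i - y j i * x k i))
        = ∑ i, ((starRingEnd ℂ) (b j i) * b k i).im := by
          refine Finset.sum_congr rfl fun i _ => ?_
          simp [Complex.mul_im, hx, hy]; ring
      _ = 0 := by rw [← Complex.im_sum, horth j k]; simp [apply_ite Complex.im]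
  have hD : ∀ j k, (∑ i, (x j i * y k i + y j i * x k i)) = 0 := by
    intro j k
    calc (∑ i, (x j i * y k i + y j i * x k i))
        = ∑ i, (b j i * b k i).im := by
          refine Finset.sum_congr rfl fun i _ => ?_
          simp [Complex.mul_im, hx, hy]
      _ = 0 := by rw [← Complex.im_sum, hisoB j k]; simp
  have hxx : ∀ j k, (∑ i, x j i * x k i) = if j = k then 2⁻¹ else 0 := by
    intro j k
    have h1 : (∑ i, (x j i * x k i + y j i * y k i)) + (∑ i, (x j i * x k i - y j i * y k i))
        = (if j = k then 1 else 0) := by rw [hA, hB, add_zero]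
    rw [← Finset.sum_add_distrib] at h1
    have h2 : (∑ i, ((x j i * x k i + y j i * y k i) + (x j i * x k i - y j i * y k i)))
        = 2 * ∑ i, x j i * x k i := by
      rw [Finset.mul_sum]; exact Finset.sum_congr rfl fun i _ => by ring
    rw [h2] at h1
    by_cases h : j = k <;> simp [h] at h1 ⊢ <;> linarith
  have hyy : ∀ j k, (∑ i, y j i * y k i) = if j = k then 2⁻¹ else 0 := by
    intro j k
    have h1 : (∑ i, (x j i * x k i + y j i * y k i)) - (∑ i, (x j i * x k i - y j i * y k i))
        = (if j = k then 1 else 0) := by rw [hA, hB, sub_zero]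
    rw [← Finset.sum_sub_distrib] at h1
    have h2 : (∑ i, ((x j i * x k i + y j i * y k i) - (x j i * x k i - y j i * y k i)))
        = 2 * ∑ i, y j i * y k i := by
      rw [Finset.mul_sum]; exact Finset.sum_congr rfl fun i _ => by ring
    rw [h2] at h1
    by_cases h : j = k <;> simp [h] at h1 ⊢ <;> linarith
  have hxy : ∀ j k, (∑ i, x j i * y k i) = 0 := by
    intro j k
    have h1 : (∑ i, (x j i * y k i - y j i * x k i)) + (∑ i, (x j i * y k i + y j i * x k i))
        = 0 := by rw [hC, hD, add_zero]
    rw [← Finset.sum_add_distrib] at h1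
    have h2 : (∑ i, ((x j i * y k i - y j i * x k i) + (x j i * y k i + y j i * x k i)))
        = 2 * ∑ i, x j i * y k i := by
      rw [Finset.mul_sum]; exact Finset.sum_congr rfl fun i _ => by ring
    rw [h2] at h1
    linarith
  have hyx : ∀ j k, (∑ i, y j i * x k i) = 0 := by
    intro j k
    have h1 : (∑ i, (x j i * y k i + y j i * x k i)) - (∑ i, (x j i * y k i - y j i * x k i))
        = 0 := by rw [hC, hD, sub_zero]
    rw [← Finset.sum_sub_distrib] at h1
    have h2 : (∑ i, ((x j i * y k i + y j i * x k i) - (x j i * y k i - y j i * x k i)))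
        = 2 * ∑ i, y j i * x k i := by
      rw [Finset.mul_sum]; exact Finset.sum_congr rfl fun i _ => by ring
    rw [h2] at h1
    linarith
  -- completeness relation
  set P : Matrix (Fin m ⊕ Fin m) (Fin (2 * m)) ℝ := Matrix.of (Sum.elim x y) with hP
  have hPPT : P * Pᵀ = (2 : ℝ)⁻¹ • 1 := by
    ext s t
    cases s <;> cases t <;>
      simp [hP, Matrix.mul_apply, Matrix.one_apply, hxx, hyy, hxy, hyx, Sum.elim]
  set e : (Fin m ⊕ Fin m) ≃ Fin (2 * m) := finSumFinEquiv.trans (finCongr (by omega)) with he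
  set Q : Matrix (Fin (2 * m)) (Fin (2 * m)) ℝ := P.submatrix e.symm id with hQ
  have hQQT : Q * Qᵀ = (2 : ℝ)⁻¹ • 1 := by
    ext i j
    have h5 := congrArg (fun M => M (e.symm i) (e.symm j)) hPPT
    simp only [Matrix.mul_apply, Matrix.transpose_apply, Matrix.smul_apply, Matrix.one_apply,
      smul_eq_mul, EmbeddingLike.apply_eq_iff_eq] at h5
    simpa [hQ, Matrix.mul_apply, Matrix.smul_apply, Matrix.one_apply] using h5
  have hQTQ : Qᵀ * Q = (2 : ℝ)⁻¹ • 1 := by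
    have h1 : ((2 : ℝ) • Q) * Qᵀ = 1 := by
      rw [Matrix.smul_mul, hQQT, smul_smul]; norm_num
    have h2 : Qᵀ * ((2 : ℝ) • Q) = 1 := mul_eq_one_comm.mp h1
    rw [Matrix.mul_smul] at h2
    calc Qᵀ * Q = (2 : ℝ)⁻¹ • ((2 : ℝ) • (Qᵀ * Q)) := by rw [smul_smul]; norm_num
      _ = (2 : ℝ)⁻¹ • (1 : Matrix (Fin (2*m)) (Fin (2*m)) ℝ) := by rw [h2]
  have hcomp : ∀ i i', (∑ j, (x j i * x j i' + y j i * y j i'))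
      = if i = i' then 2⁻¹ else 0 := by
    intro i i'
    have h3 := congrArg (fun M => M i i') hQTQ
    simp only [Matrix.mul_apply, Matrix.transpose_apply, Matrix.smul_apply, Matrix.one_apply,
      smul_eq_mul] at h3
    have h4 : (∑ s : Fin (2*m), Q s i * Q s i')
        = ∑ t : Fin m ⊕ Fin m, P t i * P t i' := by
      rw [hQ]
      simp only [Matrix.submatrix_apply, id_eq]
      exact Equiv.sum_comp e.symm (fun t => P t i * P t i')
    rw [h4] at h3
    rw [Fintype.sum_sum_type] at h3
    rw [Finset.sum_add_distrib]
    simpa [hP, mul_ite, mul_one, mul_zero] using h3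
  -- the complex structure
  set J : Matrix (Fin (2 * m)) (Fin (2 * m)) ℝ :=
    Matrix.of (fun i i' => 2 * ∑ j, (y j i * x j i' - x j i * y j i')) with hJdef
  have hJmul : ∀ (v : Fin (2 * m) → ℝ) i, J.mulVec v i
      = 2 * ∑ j, (y j i * (∑ i', x j i' * v i') - x j i * (∑ i', y j i' * v i')) := by
    intro v i
    show (∑ i', (2 * ∑ j, (y j i * x j i' - x j i * y j i')) * v i') = _
    calc (∑ i', (2 * ∑ j, (y j i * x j i' - x j i * y j i')) * v i')
        = ∑ i', ∑ j, 2 * (y j i * (x j i' * v i') - x j i * (y j i' * v i')) := by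
          refine Finset.sum_congr rfl fun i' _ => ?_
          rw [Finset.mul_sum, Finset.sum_mul]
          exact Finset.sum_congr rfl fun j _ => by ring
      _ = ∑ j, ∑ i', 2 * (y j i * (x j i' * v i') - x j i * (y j i' * v i')) := Finset.sum_comm
      _ = 2 * ∑ j, (y j i * (∑ i', x j i' * v i') - x j i * (∑ i', y j i' * v i')) := by
          rw [Finset.mul_sum]
          refine Finset.sum_congr rfl fun j _ => ?_
          rw [Finset.mul_sum, Finset.mul_sum, ← Finset.sum_sub_distrib, Finset.mul_sum]
  have hS1 : ∀ (k : Fin m) (w : Fin (2 * m) → ℝ),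
      (∑ i', x k i' * J.mulVec w i') = -(∑ i', y k i' * w i') := by
    intro k w
    calc (∑ i', x k i' * J.mulVec w i')
        = ∑ i', x k i' * (2 * ∑ j, (y j i' * (∑ i'', x j i'' * w i'')
            - x j i' * (∑ i'', y j i'' * w i''))) :=
          Finset.sum_congr rfl fun i' _ => by rw [hJmul w i']
      _ = 2 * ∑ j, ((∑ i', x k i' * y j i') * (∑ i'', x j i'' * w i'')
            - (∑ i', x k i' * x j i') * (∑ i'', y j i'' * w i'')) := swap_dot _ _ _ _ _
      _ = -(∑ i', y k i' * w i') := by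
          simp only [hxy, hxx, zero_mul, zero_sub, ite_mul, zero_mul]
          rw [Finset.sum_neg_distrib, Finset.sum_ite_eq]
          simp
  have hS2 : ∀ (k : Fin m) (w : Fin (2 * m) → ℝ),
      (∑ i', y k i' * J.mulVec w i') = (∑ i', x k i' * w i') := by
    intro k w
    calc (∑ i', y k i' * J.mulVec w i')
        = ∑ i', y k i' * (2 * ∑ j, (y j i' * (∑ i'', x j i'' * w i'')
            - x j i' * (∑ i'', y j i'' * w i''))) :=
          Finset.sum_congr rfl fun i' _ => by rw [hJmul w i']
      _ = 2 * ∑ j, ((∑ i', y k i' * y j i') * (∑ i'', x j i'' * w i'')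
            - (∑ i', y k i' * x j i') * (∑ i'', y j i'' * w i'')) := swap_dot _ _ _ _ _
      _ = (∑ i', x k i' * w i') := by
          simp only [hyy, hyx, zero_mul, sub_zero, ite_mul, zero_mul]
          rw [Finset.sum_ite_eq]
          simp
  have hcompv : ∀ (v₀ : Fin (2 * m) → ℝ) i, v₀ i
      = ∑ j, ((2 * ∑ i', x j i' * v₀ i') * x j i + (2 * ∑ i', y j i' * v₀ i') * y j i) := by
    intro v₀ i
    symm
    calc (∑ j, ((2 * ∑ i', x j i' * v₀ i') * x j i + (2 * ∑ i', y j i' * v₀ i') * y j i))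
        = ∑ j, ∑ i', 2 * ((x j i * x j i' + y j i * y j i') * v₀ i') := by
          refine Finset.sum_congr rfl fun j _ => ?_
          rw [Finset.mul_sum, Finset.sum_mul, Finset.mul_sum, Finset.sum_mul,
            ← Finset.sum_add_distrib]
          exact Finset.sum_congr rfl fun i' _ => by ring
      _ = ∑ i', ∑ j, 2 * ((x j i * x j i' + y j i * y j i') * v₀ i') := Finset.sum_comm
      _ = ∑ i', (2 * ∑ j, (x j i * x j i' + y j i * y j i')) * v₀ i' := by
          refine Finset.sum_congr rfl fun i' _ => ?_
          rw [Finset.mul_sum, Finset.sum_mul]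
          exact Finset.sum_congr rfl fun j _ => by ring
      _ = ∑ i', (if i = i' then 1 else 0) * v₀ i' := by
          refine Finset.sum_congr rfl fun i' _ => ?_
          rw [hcomp i i']
          split <;> norm_num
      _ = v₀ i := by simp [Finset.sum_ite_eq]
  have hvv : ∀ v₀ : Fin (2 * m) → ℝ, J.mulVec (J.mulVec v₀) = fun i => -(v₀ i) := by
    intro v₀
    funext i
    rw [hJmul (J.mulVec v₀) i]
    simp only [hS1, hS2]
    rw [Finset.mul_sum]
    have hneg : (∑ j, 2 * (y j i * -(∑ i'', y j i'' * v₀ i'') - x j i * (∑ i'', x j i'' * v₀ i'')))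
        = -(∑ j, ((2 * ∑ i', x j i' * v₀ i') * x j i + (2 * ∑ i', y j i' * v₀ i') * y j i)) := by
      rw [← Finset.sum_neg_distrib]
      exact Finset.sum_congr rfl fun j _ => by ring
    rw [hneg, ← hcompv v₀ i]
  have hJJ : J * J = -1 := by
    ext i i''
    have h6 := congrArg (fun f : Fin (2 * m) → ℝ => f i) (hvv (Pi.single i'' 1))
    rw [Matrix.mulVec_mulVec] at h6
    simpa [Matrix.mulVec_single, Matrix.one_apply, Pi.single_apply] using h6
  have hJsym : Jᵀ = -J := by
    ext i i'
    show (2 * ∑ j, (y j i' * x j i - x j i' * y j i)) = -(2 * ∑ j, (y j i * x j i' - x j i * y j i'))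
    rw [← mul_neg, ← Finset.sum_neg_distrib]
    exact congrArg (2 * ·) (Finset.sum_congr rfl fun j _ => by ring)
  have hJTJ : Jᵀ * J = 1 := by
    rw [hJsym, Matrix.neg_mul, hJJ, neg_neg]
  refine ⟨J, ⟨hJTJ, hJJ⟩, Set.Subset.antisymm ?_ ?_⟩
  · -- W ⊆ VJset
    intro v hv
    obtain ⟨c, hc⟩ := hspan v hv
    set v₀ : Fin (2 * m) → ℝ := fun i => ∑ j, ((c j).re * x j i + (-(c j).im) * y j i)
      with hv₀def
    have hdx : ∀ k, (∑ i, x k i * v₀ i) = (c k).re * 2⁻¹ := fun k =>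
      dot_helper x y hxx hxy (fun j => (c j).re) (fun j => -(c j).im) v₀ (fun i => rfl) k
    have hdy : ∀ k, (∑ i, y k i * v₀ i) = (-(c k).im) * 2⁻¹ := fun k =>
      dot_helper y x hyy hyx (fun j => -(c j).im) (fun j => (c j).re) v₀
        (fun i => Finset.sum_congr rfl fun j _ => add_comm _ _) k
    have hre : ∀ i, (v i).re = v₀ i := by
      intro i
      rw [hc i, Complex.re_sum, hv₀def]
      exact Finset.sum_congr rfl fun j _ => by simp [Complex.mul_re, hx, hy]; ring
    have him : ∀ i, (v i).im = J.mulVec v₀ i := by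
      intro i
      rw [hc i, Complex.im_sum, hJmul v₀ i]
      simp only [hdx, hdy]
      rw [Finset.mul_sum]
      exact Finset.sum_congr rfl fun j _ => by simp [Complex.mul_im, hx, hy]; ring
    refine ⟨v₀, ?_⟩
    funext i
    simp only [Pi.add_apply, Pi.smul_apply, smul_eq_mul]
    rw [congrFun (mulVec_map_coe J v₀) i]
    apply Complex.ext
    · simp [hre i]
    · simp [him i]
  · -- VJset ⊆ W
    rintro v ⟨v₀, hv⟩
    have hkey : v = ∑ j, ((((2 * ∑ i', x j i' * v₀ i' : ℝ) : ℂ)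
        - Complex.I * ((2 * ∑ i', y j i' * v₀ i' : ℝ) : ℂ)) • b j) := by
      rw [hv]
      funext i
      simp only [Pi.add_apply, Pi.smul_apply, smul_eq_mul, Finset.sum_apply]
      rw [congrFun (mulVec_map_coe J v₀) i]
      apply Complex.ext
      · simp only [Complex.add_re, Complex.ofReal_re, Complex.mul_re, Complex.I_re,
          Complex.I_im, Complex.ofReal_im, Complex.re_sum, zero_mul, one_mul, zero_sub,
          neg_zero, add_zero]
        rw [hcompv v₀ i]
        refine Finset.sum_congr rfl fun j _ => ?_
        simp [Complex.sub_re, Complex.sub_im, Complex.mul_re, Complex.mul_im, hx, hy]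
      · simp only [Complex.add_im, Complex.ofReal_im, Complex.mul_im, Complex.I_re,
          Complex.I_im, Complex.ofReal_re, Complex.im_sum, zero_mul, one_mul, add_zero,
          zero_add]
        rw [hJmul v₀ i, Finset.mul_sum]
        refine Finset.sum_congr rfl fun j _ => ?_
        simp [Complex.sub_re, Complex.sub_im, Complex.mul_re, Complex.mul_im, hx, hy]
        ring
    rw [hkey]
    exact Submodule.sum_mem W fun j _ => Submodule.smul_mem W _ (hbW j)

lemma re_im_of_VJ {n : ℕ} (J : Matrix (Fin n) (Fin n) ℝ) (v₀ : Fin n → ℝ)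
    (v : Fin n → ℂ)
    (h : v = (fun i => (v₀ i : ℂ)) +
        Complex.I • (J.map (fun x => (x : ℂ))).mulVec (fun i => (v₀ i : ℂ))) :
    (∀ i, (v i).re = v₀ i) ∧ (∀ i, (v i).im = J.mulVec v₀ i) := by
  rw [mulVec_map_coe] at h
  subst h
  constructor <;> intro i <;> simp

lemma VJ_inj (m : ℕ) (J₁ J₂ : Matrix (Fin (2 * m)) (Fin (2 * m)) ℝ)
    (h : VJset m J₁ = VJset m J₂) : J₁ = J₂ := by
  ext i k
  set v : Fin (2 * m) → ℂ :=
    (fun i => ((Pi.single k 1 : Fin (2 * m) → ℝ) i : ℂ)) +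
      Complex.I • (J₁.map (fun x => (x : ℂ))).mulVec
        (fun i => ((Pi.single k 1 : Fin (2 * m) → ℝ) i : ℂ)) with hv
  have h1 : v ∈ VJset m J₁ := ⟨Pi.single k 1, hv⟩
  rw [h] at h1
  obtain ⟨u, hu⟩ := h1
  have H1 := re_im_of_VJ J₁ (Pi.single k 1) v hv
  have H2 := re_im_of_VJ J₂ u v hu
  have hu' : u = Pi.single k 1 := by
    funext j
    rw [← H2.1 j, H1.1 j]
  have him : J₁.mulVec (Pi.single k 1) i = J₂.mulVec (Pi.single k 1) i := by
    rw [← H1.2 i, H2.2 i, hu']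
  simpa [Matrix.mulVec_single] using him

/-- `J ↦ V(J)` is a bijection from the orthogonal complex structures on
Euclidean `ℝ^{2m}` onto the maximal isotropic subspaces of `(ℂ^{2m}, B)`: it is injective,
and every `m`-dimensional totally isotropic subspace `W` equals `V(J)` for a unique `J`. -/
theorem VJ_bijection_maximal_isotropic (m : ℕ) :
    (∀ J₁ J₂ : Matrix (Fin (2 * m)) (Fin (2 * m)) ℝ,
      J₁ᵀ * J₁ = 1 → J₁ * J₁ = -1 → J₂ᵀ * J₂ = 1 → J₂ * J₂ = -1 →
      VJset m J₁ = VJset m J₂ → J₁ = J₂) ∧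
    (∀ W : Submodule ℂ (Fin (2 * m) → ℂ),
      Module.finrank ℂ W = m →
      (∀ v ∈ W, ∀ w ∈ W, ∑ i, v i * w i = 0) →
      ∃! J : Matrix (Fin (2 * m)) (Fin (2 * m)) ℝ,
        (Jᵀ * J = 1 ∧ J * J = -1) ∧ (W : Set (Fin (2 * m) → ℂ)) = VJset m J) := by
  constructor
  · intro J₁ J₂ _ _ _ _ h
    exact VJ_inj m J₁ J₂ h
  · intro W hdim hiso
    obtain ⟨J, hJ, hW⟩ := exists_ocs m W hdim hiso
    refine ⟨J, ⟨hJ, hW⟩, ?_⟩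
    rintro J' ⟨hJ', hW'⟩
    exact VJ_inj m J' J (by rw [← hW', ← hW])
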